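/- Say a group K has property 𝔉 if, for every finite group H, the set of group homomorphisms from H to K has finitely many orbits under the action of K by conjugation (k·f := (h ↦ k·f(h)·k⁻¹)). If K has property 𝔉 and K' is a subgroup of K of finite index, then K' has property 𝔉. -/

import Mathlib

/-- A group `K` has property `𝔉` if for every finite group `H` the set of group homomorphisms
`H →* K` has finitely many orbits under the conjugation action of `K`, where `k : K` acts on
`f : H →* K` by `(k · f) h = k * f h * k⁻¹`.  Equivalently, there is a finite set of
homomorphisms meeting every conjugation orbit. -/
def HasPropertyF (K : Type*) [Group K] : Prop :=
  ∀ (H : Type) [Group H] [Finite H],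
    ∃ S : Set (H →* K), S.Finite ∧
      ∀ f : H →* K, ∃ g ∈ S, ∃ k : K, ∀ h : H, f h = k * g h * k⁻¹

/-- If `K` has property `𝔉` and `K'` is a finite-index subgroup of `K`, then
`K'` has property `𝔉`. -/
theorem stmt_10 {K : Type*} [Group K] (K' : Subgroup K) (hK : HasPropertyF K)
    (hindex : K'.FiniteIndex) : HasPropertyF K' := by
  intro H _ _
  obtain ⟨S, hSfin, hS⟩ := hK H
  haveI : Finite (K ⧸ K') := K'.finite_quotient_of_finiteIndex
  refine ⟨⋃ g ∈ S, ⋃ q : K ⧸ K',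
      {f' : H →* K' | ∀ h, (f' h : K) = q.out⁻¹ * g h * q.out}, ?_, ?_⟩
  · refine Set.Finite.biUnion hSfin fun g _ => Set.finite_iUnion fun q => ?_
    refine Set.Subsingleton.finite fun a ha b hb => ?_
    ext h
    exact (ha h).trans (hb h).symm
  · intro f
    obtain ⟨g, hg, k, hk⟩ := hS (K'.subtype.comp f)
    set q : K ⧸ K' := QuotientGroup.mk k⁻¹ with hq
    set r : K := q.out with hrdef
    have hr : k * r ∈ K' := by
      have h1 : (q.out : K ⧸ K') = QuotientGroup.mk k⁻¹ := q.out_eq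
      have h2 : r⁻¹ * k⁻¹ ∈ K' := by
        have := QuotientGroup.eq.mp h1
        simpa using this
      have := K'.inv_mem h2
      simpa [mul_inv_rev] using this
    have hrange : ∀ h, r⁻¹ * g h * r ∈ K' := by
      intro h
      have h1 : (f h : K) = k * g h * k⁻¹ := hk h
      have h2 : r⁻¹ * g h * r = (k * r)⁻¹ * (f h : K) * (k * r) := by
        rw [h1]; group
      rw [h2]
      exact K'.mul_mem (K'.mul_mem (K'.inv_mem hr) (f h).2) hr
    refine ⟨((MulAut.conj r⁻¹).toMonoidHom.comp g).codRestrict K'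
        (fun h => by simpa [mul_assoc] using hrange h), ?_, ⟨k * r, hr⟩, ?_⟩
    · refine Set.mem_biUnion hg ?_
      refine Set.mem_iUnion.mpr ⟨q, fun h => ?_⟩
      simp [MonoidHom.codRestrict, MulAut.conj, mul_assoc]
      rfl
    · intro h
      refine Subtype.ext ?_
      push_cast
      have h1 : (f h : K) = k * g h * k⁻¹ := hk h
      simp only [MonoidHom.codRestrict_apply, MonoidHom.comp_apply,
        MulEquiv.coe_toMonoidHom, MulAut.conj_apply]
      rw [h1]; group
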